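/- Let b > 0 and let f be a continuous function on [0,b] such that f is differentiable with negative derivative on (0,b), f(b) = 0, and ∫₀^b f(x) dx = 1. If the differential entropies of f and of its inverse function f⁻¹ both exist, then -∫₀^b f(x) ln(f(x)) dx - ∫₀^{f(0)} f⁻¹(y) ln(f⁻¹(y)) dy = -1 - ∫₀^b f(x) ln(x f(x)) dx. -/

import Mathlib

open MeasureTheory

/-- If `f` is continuous on `[0,b]`, differentiable with negative derivative
on `(0,b)`, `f b = 0`, `∫₀^b f = 1`, and `g` is the inverse function of `f`
(mapping `[0, f 0]` back to `[0, b]`), and the differential entropies of `f` and `g` both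
exist, then the sum of the two differential entropies equals `-1 - ∫₀^b f(x) ln(x f(x)) dx`. -/
theorem sum_of_differential_entropies_eq (b : ℝ) (hb : 0 < b) (f g : ℝ → ℝ)
    (hf_cont : ContinuousOn f (Set.Icc 0 b))
    (hf_deriv : ∀ x ∈ Set.Ioo 0 b, ∃ d : ℝ, HasDerivAt f d x ∧ d < 0)
    (hfb : f b = 0)
    (hf_int : (∫ x in (0:ℝ)..b, f x) = 1)
    (hg : Set.InvOn g f (Set.Icc 0 b) (Set.Icc 0 (f 0)))
    (h_ent_f : IntervalIntegrable (fun x => f x * Real.log (f x)) volume 0 b)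
    (h_ent_g : IntervalIntegrable (fun y => g y * Real.log (g y)) volume 0 (f 0))
    (h_ent_xf : IntervalIntegrable (fun x => f x * Real.log (x * f x)) volume 0 b) :
    (-∫ x in (0:ℝ)..b, f x * Real.log (f x)) -
        (∫ y in (0:ℝ)..(f 0), g y * Real.log (g y)) =
      -1 - ∫ x in (0:ℝ)..b, f x * Real.log (x * f x) := by
  -- f is strictly antitone on [0, b]
  have hanti : StrictAntiOn f (Set.Icc 0 b) := by
    apply strictAntiOn_of_deriv_neg (convex_Icc 0 b) hf_cont
    intro x hx
    rw [interior_Icc] at hx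
    obtain ⟨d, hd, hdneg⟩ := hf_deriv x hx
    rwa [hd.deriv]
  have h0mem : (0:ℝ) ∈ Set.Icc (0:ℝ) b := ⟨le_rfl, hb.le⟩
  have hbmem : b ∈ Set.Icc (0:ℝ) b := ⟨hb.le, le_rfl⟩
  have hf0 : 0 < f 0 := by
    have := hanti h0mem hbmem hb
    rwa [hfb] at this
  -- f maps [0,b] into [0, f 0] and onto it
  have hmapsTo : Set.MapsTo f (Set.Icc 0 b) (Set.Icc 0 (f 0)) := by
    intro x hx
    constructor
    · rw [← hfb]; exact hanti.antitoneOn hx hbmem hx.2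
    · exact hanti.antitoneOn h0mem hx hx.1
  have hsurj : Set.SurjOn f (Set.Icc 0 b) (Set.Icc 0 (f 0)) := by
    have := intermediate_value_Icc' hb.le hf_cont
    rw [hfb] at this
    exact this
  have hmemIoo : ∀ x ∈ Set.Ioo 0 b, f x ∈ Set.Ioo 0 (f 0) := by
    intro x hx
    constructor
    · rw [← hfb]; exact hanti (Set.Ioo_subset_Icc_self hx) hbmem hx.2
    · exact hanti h0mem (Set.Ioo_subset_Icc_self hx) hx.1
  -- g is continuous on [0, f 0]
  have hinj : Set.InjOn f (Set.Icc 0 b) := hanti.injOn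
  haveI : CompactSpace (Set.Icc (0:ℝ) b) := isCompact_iff_compactSpace.mp isCompact_Icc
  let F : Set.Icc (0:ℝ) b → Set.Icc (0:ℝ) (f 0) := fun x => ⟨f x, hmapsTo x.2⟩
  have hFcont : Continuous F := Continuous.subtype_mk hf_cont.restrict _
  have hFbij : Function.Bijective F := by
    constructor
    · intro x y hxy
      exact Subtype.ext (hinj x.2 y.2 (congrArg Subtype.val hxy))
    · intro y
      obtain ⟨x, hx, hfx⟩ := hsurj y.2
      exact ⟨⟨x, hx⟩, Subtype.ext hfx⟩
  let E : Set.Icc (0:ℝ) b ≃ Set.Icc (0:ℝ) (f 0) := Equiv.ofBijective F hFbij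
  have hEcont : Continuous E := hFcont
  let H : Set.Icc (0:ℝ) b ≃ₜ Set.Icc (0:ℝ) (f 0) := hEcont.homeoOfEquivCompactToT2
  have hgH : Set.restrict (Set.Icc 0 (f 0)) g = Subtype.val ∘ H.symm := by
    funext y
    have h1 : F (H.symm y) = y := H.apply_symm_apply y
    have h2 : f ((H.symm y : Set.Icc (0:ℝ) b) : ℝ) = (y : ℝ) := congrArg Subtype.val h1
    have h3 : g (f ((H.symm y : Set.Icc (0:ℝ) b) : ℝ)) = ((H.symm y : Set.Icc (0:ℝ) b) : ℝ) :=
      hg.1 (H.symm y).2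
    simp only [Set.restrict_apply, Function.comp_apply]
    show g y = _
    rw [← h2, h3]
  have hgcont : ContinuousOn g (Set.Icc 0 (f 0)) := by
    rw [continuousOn_iff_continuous_restrict]
    change Continuous (Set.restrict (Set.Icc 0 (f 0)) g)
    rw [hgH]
    exact continuous_subtype_val.comp H.symm.continuous
  -- the entropy integrand of g is continuous on the open interval
  have hφcont : ContinuousOn (fun y => g y * Real.log (g y)) (Set.Ioo 0 (f 0)) :=
    Real.continuous_mul_log.comp_continuousOn (hgcont.mono Set.Ioo_subset_Icc_self)
  -- integrability of f and f * log
  have hfint : IntervalIntegrable f volume 0 b := by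
    apply ContinuousOn.intervalIntegrable
    rwa [Set.uIcc_of_le hb.le]
  have hfpos : ∀ x ∈ Set.Ioc 0 b, 0 ≤ f x := by
    intro x hx
    rw [← hfb]
    exact hanti.antitoneOn ⟨hx.1.le, hx.2⟩ hbmem hx.2
  have hsplit : ∀ x ∈ Set.Ioc 0 b,
      f x * Real.log (x * f x) - f x * Real.log (f x) = f x * Real.log x := by
    intro x hx
    rcases eq_or_lt_of_le (hfpos x hx) with h | h
    · rw [← h]; ring
    · rw [Real.log_mul (ne_of_gt hx.1) (ne_of_gt h)]; ring
  have hflog : IntervalIntegrable (fun x => f x * Real.log x) volume 0 b := by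
    have h := h_ent_xf.sub h_ent_f
    rw [intervalIntegrable_iff] at h ⊢
    rw [Set.uIoc_of_le hb.le] at h ⊢
    exact h.congr_fun hsplit measurableSet_Ioc
  have hψint : IntervalIntegrable (fun x => f x + f x * Real.log x) volume 0 b :=
    hfint.add hflog
  -- the key identity : ∫ g log g = ∫ (f + f log x)
  have key : (∫ y in (0:ℝ)..(f 0), g y * Real.log (g y)) =
      ∫ x in (0:ℝ)..b, (f x + f x * Real.log x) := by
    set φ : ℝ → ℝ := fun y => g y * Real.log (g y) with hφ
    set ψ : ℝ → ℝ := fun x => f x + f x * Real.log x with hψ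
    set P : ℝ → ℝ := fun u => ∫ y in (0:ℝ)..u, φ y with hP
    set G : ℝ → ℝ := fun t => P (f t) + (∫ x in b..t, ψ x) - f t * (t * Real.log t) with hG
    have hU : Set.uIcc (0:ℝ) b = Set.Icc 0 b := Set.uIcc_of_le hb.le
    have hU' : Set.uIcc (0:ℝ) (f 0) = Set.Icc 0 (f 0) := Set.uIcc_of_le hf0.le
    -- continuity of G on [0,b]
    have hPcont : ContinuousOn P (Set.Icc 0 (f 0)) := by
      have := intervalIntegral.continuousOn_primitive_interval' h_ent_g
        (Set.left_mem_uIcc (a := (0:ℝ)) (b := f 0))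
      rwa [hU'] at this
    have hGcont : ContinuousOn G (Set.Icc 0 b) := by
      apply ContinuousOn.sub
      · apply ContinuousOn.add
        · exact hPcont.comp hf_cont hmapsTo
        · have := intervalIntegral.continuousOn_primitive_interval'
            (hψint.symm) (Set.left_mem_uIcc (a := b) (b := (0:ℝ)))
          rwa [Set.uIcc_comm, hU] at this
      · exact hf_cont.mul (Real.continuous_mul_log.continuousOn)
    -- derivative of G is zero on (0,b)
    have hGderiv : ∀ t ∈ Set.Ioo 0 b, HasDerivAt G 0 t := by
      intro t ht
      obtain ⟨d, hd, hdneg⟩ := hf_deriv t ht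
      have hft : f t ∈ Set.Ioo 0 (f 0) := hmemIoo t ht
      -- derivative of P ∘ f
      have hPder : HasDerivAt P (φ (f t)) (f t) := by
        apply intervalIntegral.integral_hasDerivAt_right
        · apply h_ent_g.mono_set
          rw [hU', Set.uIcc_of_le hft.1.le]
          exact Set.Icc_subset_Icc le_rfl hft.2.le
        · exact ContinuousOn.stronglyMeasurableAtFilter isOpen_Ioo hφcont (f t) hft
        · exact hφcont.continuousAt (Ioo_mem_nhds hft.1 hft.2)
      have h1 : HasDerivAt (fun t => P (f t)) (φ (f t) * d) t := hPder.comp t hd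
      have hgf : g (f t) = t := hg.1 (Set.Ioo_subset_Icc_self ht)
      have hφft : φ (f t) = t * Real.log t := by
        simp only [hφ, hgf]
      -- derivative of the middle integral
      have hψcont : ContinuousOn ψ (Set.Ioo 0 b) := by
        apply ContinuousOn.add (hf_cont.mono Set.Ioo_subset_Icc_self)
        apply ContinuousOn.mul (hf_cont.mono Set.Ioo_subset_Icc_self)
        apply Real.continuousOn_log.mono
        intro x hx
        exact ne_of_gt hx.1
      have h2 : HasDerivAt (fun t => ∫ x in b..t, ψ x) (ψ t) t := by
        apply intervalIntegral.integral_hasDerivAt_right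
        · apply hψint.symm.mono_set
          rw [Set.uIcc_comm b t, Set.uIcc_comm b 0, hU, Set.uIcc_of_le ht.2.le]
          exact Set.Icc_subset_Icc ht.1.le le_rfl
        · exact ContinuousOn.stronglyMeasurableAtFilter isOpen_Ioo hψcont t ht
        · exact hψcont.continuousAt (Ioo_mem_nhds ht.1 ht.2)
      -- derivative of the product term
      have h3 : HasDerivAt (fun t => f t * (t * Real.log t))
          (d * (t * Real.log t) + f t * (Real.log t + 1)) t :=
        hd.mul (Real.hasDerivAt_mul_log (ne_of_gt ht.1))
      have h4 := (h1.add h2).sub h3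
      have heq : φ (f t) * d + ψ t - (d * (t * Real.log t) + f t * (Real.log t + 1)) = 0 := by
        rw [hφft]; simp only [hψ]; ring
      rw [heq] at h4
      exact h4
    -- apply FTC
    have hFTC : (∫ t in (0:ℝ)..b, (0:ℝ)) = G b - G 0 := by
      apply intervalIntegral.integral_eq_sub_of_hasDeriv_right
      · rwa [hU]
      · intro x hx
        rw [min_eq_left hb.le, max_eq_right hb.le] at hx
        exact (hGderiv x hx).hasDerivWithinAt
      · exact intervalIntegrable_const
    have hGb : G b = 0 := by
      simp only [hG, hfb, intervalIntegral.integral_same, zero_mul]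
      simp [hP]
    have hG0 : G 0 = (∫ y in (0:ℝ)..(f 0), φ y) - ∫ x in (0:ℝ)..b, ψ x := by
      simp only [hG, hP]
      rw [intervalIntegral.integral_symm b 0]
      simp [Real.log_zero]
    rw [intervalIntegral.integral_zero, hGb, hG0] at hFTC
    have := sub_eq_zero.mp hFTC.symm
    linarith [this]
  -- split ∫ f log (x f x)
  have hC : (∫ x in (0:ℝ)..b, f x * Real.log (x * f x)) =
      (∫ x in (0:ℝ)..b, f x * Real.log x) + ∫ x in (0:ℝ)..b, f x * Real.log (f x) := by
    rw [← intervalIntegral.integral_add hflog h_ent_f]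
    apply intervalIntegral.integral_congr_ae
    apply MeasureTheory.ae_of_all
    intro x hx
    rw [Set.uIoc_of_le hb.le] at hx
    have := hsplit x hx
    linarith [this]
  rw [key, intervalIntegral.integral_add hfint hflog, hf_int, hC]
  ring
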